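/- Let (α,β) ∈ G_p := {α > 0, β ≥ 0, α(p−1) > β}, with 1+2/N < p < N/(N−2). Then the minimization value m_{α,β} := inf{ S(u) : u ∈ H, u ≠ 0, K_{α,β}(u) = 0 } equals inf{ H_{α,β}(u) : u ∈ H, u ≠ 0, K_{α,β}(u) ≤ 0 }, where H_{α,β}(u) = S(u) − K_{α,β}(u)/(2α+(N+2)β). -/

import Mathlib

set_option maxHeartbeats 1000000

open MeasureTheory

/-- Membership of an `m`-tuple in the energy space `H = Σ^m` (with enough
regularity for the variational analysis). -/
def InH (N m : ℕ) (p : ℝ) (u : Fin m → EuclideanSpace ℝ (Fin N) → ℂ) : Prop :=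
  (∀ j, Differentiable ℝ (u j)) ∧
  (∀ j, Integrable (fun x => ‖u j x‖^2)) ∧
  (∀ j, Integrable (fun x => ‖x‖^2 * ‖u j x‖^2)) ∧
  (∀ j, Integrable (fun x => ‖fderiv ℝ (u j) x‖^2)) ∧
  (∀ j k, Integrable (fun x => (‖u j x‖ * ‖u k x‖) ^ p))

/-- The action functional `S(u)`. -/
noncomputable def Sfun (N m : ℕ) (p : ℝ) (a : Fin m → Fin m → ℝ)
    (u : Fin m → EuclideanSpace ℝ (Fin N) → ℂ) : ℝ :=
  (1/2) * (∑ j, ((∫ x, ‖u j x‖^2) + (∫ x, ‖x‖^2 * ‖u j x‖^2)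
      + (∫ x, ‖fderiv ℝ (u j) x‖^2)))
    - (1/(2*p)) * ∑ j, ∑ k, a j k * ∫ x, (‖u j x‖ * ‖u k x‖) ^ p

/-- The constraint functional `K_{α,β}(u)`. -/
noncomputable def Kfun (N m : ℕ) (p α β : ℝ) (a : Fin m → Fin m → ℝ)
    (u : Fin m → EuclideanSpace ℝ (Fin N) → ℂ) : ℝ :=
  (1/2) * (∑ j, ((2*α + ((N:ℝ) - 2)*β) * (∫ x, ‖fderiv ℝ (u j) x‖^2)
      + (2*α + (N:ℝ)*β) * (∫ x, ‖u j x‖^2)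
      + (2*α + ((N:ℝ) + 2)*β) * (∫ x, ‖x‖^2 * ‖u j x‖^2)))
    - (2*p*α + (N:ℝ)*β)/(2*p) * ∑ j, ∑ k, a j k * ∫ x, (‖u j x‖ * ‖u k x‖) ^ p

/-- `H_{α,β} = S − K_{α,β}/(2α+(N+2)β)`. -/
noncomputable def Hfun (N m : ℕ) (p α β : ℝ) (a : Fin m → Fin m → ℝ)
    (u : Fin m → EuclideanSpace ℝ (Fin N) → ℂ) : ℝ :=
  Sfun N m p a u - Kfun N m p α β a u / (2*α + ((N:ℝ) + 2)*β)

/-! ### Auxiliary definitions -/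

/-- Quadratic part of `S`. -/
noncomputable def Aq (N m : ℕ) (u : Fin m → EuclideanSpace ℝ (Fin N) → ℂ) : ℝ :=
  ∑ j, ((∫ x, ‖u j x‖^2) + (∫ x, ‖x‖^2 * ‖u j x‖^2)
      + (∫ x, ‖fderiv ℝ (u j) x‖^2))

/-- The nonlinear part. -/
noncomputable def Pq (N m : ℕ) (p : ℝ) (a : Fin m → Fin m → ℝ)
    (u : Fin m → EuclideanSpace ℝ (Fin N) → ℂ) : ℝ :=
  ∑ j, ∑ k, a j k * ∫ x, (‖u j x‖ * ‖u k x‖) ^ p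

/-- Quadratic part of `K`. -/
noncomputable def Qq (N m : ℕ) (α β : ℝ)
    (u : Fin m → EuclideanSpace ℝ (Fin N) → ℂ) : ℝ :=
  (1/2) * (∑ j, ((2*α + ((N:ℝ) - 2)*β) * (∫ x, ‖fderiv ℝ (u j) x‖^2)
      + (2*α + (N:ℝ)*β) * (∫ x, ‖u j x‖^2)
      + (2*α + ((N:ℝ) + 2)*β) * (∫ x, ‖x‖^2 * ‖u j x‖^2)))

lemma Sfun_eq (N m : ℕ) (p : ℝ) (a : Fin m → Fin m → ℝ)
    (u : Fin m → EuclideanSpace ℝ (Fin N) → ℂ) :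
    Sfun N m p a u = (1/2) * Aq N m u - (1/(2*p)) * Pq N m p a u := rfl

lemma Kfun_eq (N m : ℕ) (p α β : ℝ) (a : Fin m → Fin m → ℝ)
    (u : Fin m → EuclideanSpace ℝ (Fin N) → ℂ) :
    Kfun N m p α β a u = Qq N m α β u
      - (2*p*α + (N:ℝ)*β)/(2*p) * Pq N m p a u := rfl

/-! ### Scaling lemmas -/

section scale

variable {N m : ℕ} {p α β t : ℝ} {a : Fin m → Fin m → ℝ}
  {u : Fin m → EuclideanSpace ℝ (Fin N) → ℂ}

lemma int_norm_smul (ht : 0 ≤ t) (j : Fin m) :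
    (∫ x, ‖t • u j x‖^2) = t^2 * ∫ x, ‖u j x‖^2 := by
  simp_rw [norm_smul, Real.norm_eq_abs, abs_of_nonneg ht, mul_pow]
  exact integral_const_mul _ _

lemma int_weight_smul (ht : 0 ≤ t) (j : Fin m) :
    (∫ x, ‖x‖^2 * ‖t • u j x‖^2) = t^2 * ∫ x, ‖x‖^2 * ‖u j x‖^2 := by
  simp_rw [norm_smul, Real.norm_eq_abs, abs_of_nonneg ht, mul_pow]
  rw [← integral_const_mul]
  congr 1; funext x; ring

lemma int_fderiv_smul (ht : 0 ≤ t) (hd : ∀ j, Differentiable ℝ (u j)) (j : Fin m) :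
    (∫ x, ‖fderiv ℝ (fun y => t • u j y) x‖^2) = t^2 * ∫ x, ‖fderiv ℝ (u j) x‖^2 := by
  have h : ∀ x, ‖fderiv ℝ (fun y => t • u j y) x‖^2 = t^2 * ‖fderiv ℝ (u j) x‖^2 := by
    intro x
    rw [fderiv_fun_const_smul (hd j x) t, norm_smul t (fderiv ℝ (u j) x), Real.norm_eq_abs, abs_of_nonneg ht, mul_pow]
  simp_rw [h]
  exact integral_const_mul _ _

lemma int_nl_smul (ht : 0 ≤ t) (j k : Fin m) :
    (∫ x, (‖t • u j x‖ * ‖t • u k x‖) ^ p)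
      = (t^2) ^ p * ∫ x, (‖u j x‖ * ‖u k x‖) ^ p := by
  have h : ∀ x, (‖t • u j x‖ * ‖t • u k x‖ : ℝ) ^ p
      = (t^2) ^ p * (‖u j x‖ * ‖u k x‖) ^ p := by
    intro x
    have : (‖t • u j x‖ * ‖t • u k x‖ : ℝ) = t^2 * (‖u j x‖ * ‖u k x‖) := by
      rw [norm_smul, norm_smul, Real.norm_eq_abs, abs_of_nonneg ht]; ring
    rw [this, Real.mul_rpow (sq_nonneg t) (by positivity)]
  simp_rw [h]
  exact integral_const_mul _ _

lemma Aq_smul (ht : 0 ≤ t) (hd : ∀ j, Differentiable ℝ (u j)) :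
    Aq N m (fun j x => t • u j x) = t^2 * Aq N m u := by
  unfold Aq
  rw [Finset.mul_sum]
  refine Finset.sum_congr rfl fun j _ => ?_
  rw [int_norm_smul ht, int_weight_smul ht, int_fderiv_smul ht hd]
  ring

lemma Qq_smul (ht : 0 ≤ t) (hd : ∀ j, Differentiable ℝ (u j)) :
    Qq N m α β (fun j x => t • u j x) = t^2 * Qq N m α β u := by
  unfold Qq
  rw [mul_comm (t^2), mul_assoc, Finset.sum_mul]
  congr 1
  refine Finset.sum_congr rfl fun j _ => ?_
  rw [int_norm_smul ht, int_weight_smul ht, int_fderiv_smul ht hd]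
  ring

lemma Pq_smul (ht : 0 ≤ t) :
    Pq N m p a (fun j x => t • u j x) = (t^2) ^ p * Pq N m p a u := by
  unfold Pq
  rw [Finset.mul_sum]
  refine Finset.sum_congr rfl fun j _ => ?_
  rw [Finset.mul_sum]
  refine Finset.sum_congr rfl fun k _ => ?_
  rw [int_nl_smul ht]
  ring

lemma InH_smul (ht : 0 ≤ t) (hu : InH N m p u) :
    InH N m p (fun j x => t • u j x) := by
  obtain ⟨h1, h2, h3, h4, h5⟩ := hu
  refine ⟨fun j => (h1 j).const_smul t, fun j => ?_, fun j => ?_, fun j => ?_, fun j k => ?_⟩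
  · have : (fun x => ‖t • u j x‖^2) = fun x => t^2 * ‖u j x‖^2 := by
      funext x; rw [norm_smul, Real.norm_eq_abs, abs_of_nonneg ht, mul_pow]
    rw [this]; exact (h2 j).const_mul _
  · have : (fun x : EuclideanSpace ℝ (Fin N) => ‖x‖^2 * ‖t • u j x‖^2)
        = fun x => t^2 * (‖x‖^2 * ‖u j x‖^2) := by
      funext x; rw [norm_smul, Real.norm_eq_abs, abs_of_nonneg ht, mul_pow]; ring
    rw [this]; exact (h3 j).const_mul _
  · have : (fun x => ‖fderiv ℝ (fun y => t • u j y) x‖^2)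
        = fun x => t^2 * ‖fderiv ℝ (u j) x‖^2 := by
      funext x
      rw [fderiv_fun_const_smul (h1 j x) t, norm_smul t (fderiv ℝ (u j) x), Real.norm_eq_abs, abs_of_nonneg ht, mul_pow]
    rw [this]; exact (h4 j).const_mul _
  · have : (fun x => (‖t • u j x‖ * ‖t • u k x‖ : ℝ) ^ p)
        = fun x => (t^2) ^ p * (‖u j x‖ * ‖u k x‖) ^ p := by
      funext x
      have hx : (‖t • u j x‖ * ‖t • u k x‖ : ℝ) = t^2 * (‖u j x‖ * ‖u k x‖) := by
        rw [norm_smul, norm_smul, Real.norm_eq_abs, abs_of_nonneg ht]; ring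
      rw [hx, Real.mul_rpow (sq_nonneg t) (by positivity)]
    rw [this]; exact (h5 j k).const_mul _

end scale

/-! ### Sign lemmas -/

section signs

variable {N m : ℕ} {p α β : ℝ} {a : Fin m → Fin m → ℝ}
  {u : Fin m → EuclideanSpace ℝ (Fin N) → ℂ}

lemma Pq_nonneg (ha : ∀ j k, 0 < a j k) : 0 ≤ Pq N m p a u := by
  refine Finset.sum_nonneg fun j _ => Finset.sum_nonneg fun k _ => ?_
  refine mul_nonneg (ha j k).le (integral_nonneg fun x => ?_)
  exact Real.rpow_nonneg (by positivity) p

lemma Hfun_eq (hp : 0 < p) (hD : 0 < 2*α + ((N:ℝ) + 2)*β) :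
    Hfun N m p α β a u
      = ((1/2) * Aq N m u - Qq N m α β u / (2*α + ((N:ℝ) + 2)*β))
        + ((2*p*α + (N:ℝ)*β)/(2*p) / (2*α + ((N:ℝ) + 2)*β) - 1/(2*p)) * Pq N m p a u := by
  rw [Hfun, Sfun_eq, Kfun_eq]
  field_simp
  ring

lemma quad_diff_nonneg (hN : 2 ≤ N) (hα : 0 < α) (hβ : 0 ≤ β)
    (hD : 0 < 2*α + ((N:ℝ) + 2)*β) :
    0 ≤ (1/2) * Aq N m u - Qq N m α β u / (2*α + ((N:ℝ) + 2)*β) := by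
  have hN2 : (2:ℝ) ≤ (N:ℝ) := by exact_mod_cast hN
  rw [Aq, Qq, Finset.mul_sum, Finset.mul_sum, Finset.sum_div, ← Finset.sum_sub_distrib]
  refine Finset.sum_nonneg fun j _ => ?_
  have hG : 0 ≤ ∫ x, ‖fderiv ℝ (u j) x‖^2 := integral_nonneg fun x => by positivity
  have hM : 0 ≤ ∫ x, ‖u j x‖^2 := integral_nonneg fun x => by positivity
  have hV : 0 ≤ ∫ x, ‖x‖^2 * ‖u j x‖^2 := integral_nonneg fun x => by positivity
  rw [sub_nonneg, div_le_iff₀ hD]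
  nlinarith [mul_le_mul_of_nonneg_right (show 2*α + ((N:ℝ) - 2)*β ≤ 2*α + ((N:ℝ) + 2)*β by nlinarith) hG,
    mul_le_mul_of_nonneg_right (show 2*α + (N:ℝ)*β ≤ 2*α + ((N:ℝ) + 2)*β by nlinarith) hM]

lemma nl_coef_nonneg (hp1 : 1 < p) (hα : 0 < α) (hβ : 0 ≤ β)
    (hαβ : β < α * (p - 1)) (hN : 2 ≤ N) :
    0 ≤ (2*p*α + (N:ℝ)*β)/(2*p) / (2*α + ((N:ℝ) + 2)*β) - 1/(2*p) := by
  have hN2 : (2:ℝ) ≤ (N:ℝ) := by exact_mod_cast hN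
  have hD : 0 < 2*α + ((N:ℝ) + 2)*β := by nlinarith
  have hp0 : 0 < 2*p := by linarith
  rw [sub_nonneg, div_div, div_le_div_iff₀ hp0 (by positivity)]
  have : 2*α + ((N:ℝ) + 2)*β ≤ 2*p*α + (N:ℝ)*β := by nlinarith
  nlinarith [mul_le_mul_of_nonneg_left this hp0.le]

lemma Hfun_nonneg (hN : 2 ≤ N) (hp1 : 1 < p) (hα : 0 < α) (hβ : 0 ≤ β)
    (hαβ : β < α * (p - 1)) (ha : ∀ j k, 0 < a j k) :
    0 ≤ Hfun N m p α β a u := by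
  have hN2 : (2:ℝ) ≤ (N:ℝ) := by exact_mod_cast hN
  have hD : 0 < 2*α + ((N:ℝ) + 2)*β := by nlinarith
  rw [Hfun_eq (by linarith) hD]
  have h1 := quad_diff_nonneg (u := u) hN hα hβ hD
  have h2 := nl_coef_nonneg (N := N) hp1 hα hβ hαβ hN
  have h3 := Pq_nonneg (N := N) (p := p) (u := u) ha
  nlinarith

lemma Qq_pos (hN : 2 ≤ N) (hα : 0 < α) (hβ : 0 ≤ β)
    (hu : InH N m p u) (hne : u ≠ 0) : 0 < Qq N m α β u := by
  have hN2 : (2:ℝ) ≤ (N:ℝ) := by exact_mod_cast hN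
  obtain ⟨j0, hj0⟩ : ∃ j, u j ≠ 0 := by
    by_contra h
    push_neg at h
    exact hne (funext h)
  obtain ⟨x0, hx0⟩ : ∃ x, u j0 x ≠ 0 := by
    by_contra h
    push_neg at h
    exact hj0 (funext h)
  have hMpos : 0 < ∫ x, ‖u j0 x‖^2 := by
    rw [integral_pos_iff_support_of_nonneg (fun x => by positivity) (hu.2.1 j0)]
    have hcont : Continuous fun x => ‖u j0 x‖^2 := ((hu.1 j0).continuous.norm).pow 2
    refine hcont.isOpen_support.measure_pos _ ⟨x0, ?_⟩
    simp [Function.support, norm_eq_zero, hx0]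
  rw [Qq]
  have key : ∀ j ∈ Finset.univ, (0:ℝ) ≤ (2*α + ((N:ℝ) - 2)*β) * (∫ x, ‖fderiv ℝ (u j) x‖^2)
      + (2*α + (N:ℝ)*β) * (∫ x, ‖u j x‖^2)
      + (2*α + ((N:ℝ) + 2)*β) * (∫ x, ‖x‖^2 * ‖u j x‖^2) := by
    intro j _
    have hG : 0 ≤ ∫ x, ‖fderiv ℝ (u j) x‖^2 := integral_nonneg fun x => by positivity
    have hM : 0 ≤ ∫ x, ‖u j x‖^2 := integral_nonneg fun x => by positivity
    have hV : 0 ≤ ∫ x, ‖x‖^2 * ‖u j x‖^2 := integral_nonneg fun x => by positivity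
    have c1 : 0 ≤ 2*α + ((N:ℝ) - 2)*β := by nlinarith
    have c2 : 0 ≤ 2*α + (N:ℝ)*β := by nlinarith
    have c3 : 0 ≤ 2*α + ((N:ℝ) + 2)*β := by nlinarith
    positivity
  have hterm : 0 < (2*α + ((N:ℝ) - 2)*β) * (∫ x, ‖fderiv ℝ (u j0) x‖^2)
      + (2*α + (N:ℝ)*β) * (∫ x, ‖u j0 x‖^2)
      + (2*α + ((N:ℝ) + 2)*β) * (∫ x, ‖x‖^2 * ‖u j0 x‖^2) := by
    have hG : 0 ≤ ∫ x, ‖fderiv ℝ (u j0) x‖^2 := integral_nonneg fun x => by positivity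
    have hV : 0 ≤ ∫ x, ‖x‖^2 * ‖u j0 x‖^2 := integral_nonneg fun x => by positivity
    have c1 : 0 ≤ 2*α + ((N:ℝ) - 2)*β := by nlinarith
    have c2 : 0 < 2*α + (N:ℝ)*β := by nlinarith
    have c3 : 0 ≤ 2*α + ((N:ℝ) + 2)*β := by nlinarith
    nlinarith [mul_nonneg c1 hG, mul_nonneg c3 hV, mul_pos c2 hMpos]
  have hsum : 0 < ∑ j, ((2*α + ((N:ℝ) - 2)*β) * (∫ x, ‖fderiv ℝ (u j) x‖^2)
      + (2*α + (N:ℝ)*β) * (∫ x, ‖u j x‖^2)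
      + (2*α + ((N:ℝ) + 2)*β) * (∫ x, ‖x‖^2 * ‖u j x‖^2)) := by
    calc (0:ℝ) < _ := hterm
    _ ≤ _ := Finset.single_le_sum key (Finset.mem_univ j0)
  linarith

end signs

/-! ### The key construction -/

lemma key_construction (N m : ℕ) (hN : 2 ≤ N) (p α β : ℝ)
    (hp1 : 1 < p) (hα : 0 < α) (hβ : 0 ≤ β) (hαβ : β < α * (p - 1))
    (a : Fin m → Fin m → ℝ) (ha : ∀ j k, 0 < a j k)
    (u : Fin m → EuclideanSpace ℝ (Fin N) → ℂ)
    (hu : InH N m p u) (hne : u ≠ 0) (hK : Kfun N m p α β a u ≤ 0) :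
    ∃ v : Fin m → EuclideanSpace ℝ (Fin N) → ℂ,
      InH N m p v ∧ v ≠ 0 ∧ Kfun N m p α β a v = 0
      ∧ Sfun N m p a v ≤ Hfun N m p α β a u := by
  have hN2 : (2:ℝ) ≤ (N:ℝ) := by exact_mod_cast hN
  have hD : 0 < 2*α + ((N:ℝ) + 2)*β := by nlinarith
  have hc : 0 < (2*p*α + (N:ℝ)*β)/(2*p) := by
    apply div_pos (by nlinarith) (by linarith)
  set c := (2*p*α + (N:ℝ)*β)/(2*p) with hc_def
  have hQ : 0 < Qq N m α β u := Qq_pos hN hα hβ hu hne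
  have hKle : Qq N m α β u ≤ c * Pq N m p a u := by
    have := hK
    rw [Kfun_eq] at this
    linarith
  have hcP : 0 < c * Pq N m p a u := lt_of_lt_of_le hQ hKle
  have hP : 0 < Pq N m p a u := by
    by_contra h
    push_neg at h
    nlinarith
  set r := Qq N m α β u / (c * Pq N m p a u) with hr_def
  have hr0 : 0 < r := div_pos hQ hcP
  have hr1 : r ≤ 1 := (div_le_one hcP).mpr hKle
  have h2p2 : 0 < 2*p - 2 := by linarith
  set e := 1/(2*p - 2) with he_def
  have he0 : 0 < e := by positivity
  set t := r ^ e with ht_def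
  have ht : 0 < t := Real.rpow_pos_of_pos hr0 e
  have ht1 : t ≤ 1 := Real.rpow_le_one hr0.le hr1 he0.le
  -- powers of t
  have ht2 : t^2 = r ^ (e*2) := by
    rw [ht_def, ← Real.rpow_natCast (r ^ e) 2, ← Real.rpow_mul hr0.le]
    norm_num
  have ht2p : (t^2) ^ p = r ^ (e*2) * r := by
    rw [ht2, ← Real.rpow_mul hr0.le]
    have : e*2*p = e*2 + 1 := by
      rw [he_def]; field_simp
      rw [div_add_one (by linarith : p - 1 ≠ 0)]; ring_nf
    rw [this, Real.rpow_add hr0, Real.rpow_one]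
  set v : Fin m → EuclideanSpace ℝ (Fin N) → ℂ := fun j x => t • u j x with hv_def
  have hvInH : InH N m p v := InH_smul ht.le hu
  have hvne : v ≠ 0 := by
    obtain ⟨j0, hj0⟩ : ∃ j, u j ≠ 0 := by
      by_contra h; push_neg at h; exact hne (funext h)
    obtain ⟨x0, hx0⟩ : ∃ x, u j0 x ≠ 0 := by
      by_contra h; push_neg at h; exact hj0 (funext h)
    have hvx : v j0 x0 ≠ 0 := smul_ne_zero (ne_of_gt ht) hx0
    intro h
    exact hvx (by rw [h]; rfl)
  have hAv : Aq N m v = t^2 * Aq N m u := Aq_smul ht.le hu.1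
  have hQv : Qq N m α β v = t^2 * Qq N m α β u := Qq_smul ht.le hu.1
  have hPv : Pq N m p a v = (t^2) ^ p * Pq N m p a u := Pq_smul ht.le
  have hrQ : r * (c * Pq N m p a u) = Qq N m α β u :=
    div_mul_cancel₀ _ (ne_of_gt hcP)
  have hKv : Kfun N m p α β a v = 0 := by
    rw [Kfun_eq, hQv, hPv, ← hc_def, ht2p, ht2]
    calc r ^ (e*2) * Qq N m α β u - c * (r ^ (e*2) * r * Pq N m p a u)
        = r ^ (e*2) * (Qq N m α β u - r * (c * Pq N m p a u)) := by ring
      _ = 0 := by rw [hrQ, sub_self, mul_zero]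
  refine ⟨v, hvInH, hvne, hKv, ?_⟩
  have hSv : Sfun N m p a v = Hfun N m p α β a v := by
    rw [Hfun, hKv, zero_div, sub_zero]
  rw [hSv, Hfun_eq (by linarith) hD, Hfun_eq (by linarith) hD]
  have hX := quad_diff_nonneg (u := u) hN hα hβ hD
  have hC := nl_coef_nonneg (N := N) hp1 hα hβ hαβ hN
  have hquadv : (1/2) * Aq N m v - Qq N m α β v / (2*α + ((N:ℝ) + 2)*β)
      = t^2 * ((1/2) * Aq N m u - Qq N m α β u / (2*α + ((N:ℝ) + 2)*β)) := by
    rw [hAv, hQv]; ring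
  have ht2le : t^2 ≤ 1 := pow_le_one₀ ht.le ht1
  have ht2ple : (t^2) ^ p ≤ 1 := Real.rpow_le_one (sq_nonneg t) ht2le (by linarith)
  rw [hquadv, hPv, ← hc_def]
  have h1 : t^2 * ((1/2) * Aq N m u - Qq N m α β u / (2*α + ((N:ℝ) + 2)*β))
      ≤ (1/2) * Aq N m u - Qq N m α β u / (2*α + ((N:ℝ) + 2)*β) := by
    nlinarith
  have h2 : (c / (2*α + ((N:ℝ) + 2)*β) - 1/(2*p)) * ((t^2) ^ p * Pq N m p a u)
      ≤ (c / (2*α + ((N:ℝ) + 2)*β) - 1/(2*p)) * Pq N m p a u := by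
    have hcc : 0 ≤ c / (2*α + ((N:ℝ) + 2)*β) - 1/(2*p) := hC
    have : (t^2) ^ p * Pq N m p a u ≤ Pq N m p a u := by
      nlinarith [Real.rpow_nonneg (sq_nonneg t) p]
    exact mul_le_mul_of_nonneg_left this hcc
  linarith

/-- The minimization value `m_{α,β}` over `{K = 0}` of `S` equals the
infimum of `H_{α,β}` over `{K ≤ 0}`. -/
theorem stmt_9 (N m : ℕ) (hN : 2 ≤ N) (p α β : ℝ)
    (hp : 1 + 2/(N:ℝ) < p) (hpc : 3 ≤ N → p < (N:ℝ)/((N:ℝ) - 2))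
    (hα : 0 < α) (hβ : 0 ≤ β) (hαβ : β < α * (p - 1))
    (a : Fin m → Fin m → ℝ) (ha : ∀ j k, 0 < a j k) (hsym : ∀ j k, a j k = a k j) :
    sInf {s : ℝ | ∃ u : Fin m → EuclideanSpace ℝ (Fin N) → ℂ,
        InH N m p u ∧ u ≠ 0 ∧ Kfun N m p α β a u = 0 ∧ s = Sfun N m p a u}
      = sInf {s : ℝ | ∃ u : Fin m → EuclideanSpace ℝ (Fin N) → ℂ,
        InH N m p u ∧ u ≠ 0 ∧ Kfun N m p α β a u ≤ 0 ∧ s = Hfun N m p α β a u} := by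
  have hN2 : (2:ℝ) ≤ (N:ℝ) := by exact_mod_cast hN
  have hp1 : 1 < p := by
    have : 0 < 2/(N:ℝ) := by positivity
    linarith
  set S1 := {s : ℝ | ∃ u : Fin m → EuclideanSpace ℝ (Fin N) → ℂ,
      InH N m p u ∧ u ≠ 0 ∧ Kfun N m p α β a u = 0 ∧ s = Sfun N m p a u} with hS1
  set S2 := {s : ℝ | ∃ u : Fin m → EuclideanSpace ℝ (Fin N) → ℂ,
      InH N m p u ∧ u ≠ 0 ∧ Kfun N m p α β a u ≤ 0 ∧ s = Hfun N m p α β a u} with hS2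
  have hsub : S1 ⊆ S2 := by
    rintro s ⟨u, hu, hne, hK, rfl⟩
    exact ⟨u, hu, hne, le_of_eq hK, by rw [Hfun, hK, zero_div, sub_zero]⟩
  have bdd2 : BddBelow S2 := by
    refine ⟨0, fun s hs => ?_⟩
    obtain ⟨u, hu, hne, hK, rfl⟩ := hs
    exact Hfun_nonneg hN hp1 hα hβ hαβ ha
  have bdd1 : BddBelow S1 := bdd2.mono hsub
  by_cases h2 : S2.Nonempty
  · obtain ⟨s0, u0, hu0, hne0, hK0, hs0⟩ := id h2
    obtain ⟨v0, hv0, hnev0, hKv0, _⟩ :=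
      key_construction N m hN p α β hp1 hα hβ hαβ a ha u0 hu0 hne0 hK0
    have h1 : S1.Nonempty := ⟨Sfun N m p a v0, v0, hv0, hnev0, hKv0, rfl⟩
    apply le_antisymm
    · apply le_csInf h2
      rintro s ⟨w, hw, hnew, hKw, rfl⟩
      obtain ⟨v, hv, hnev, hKv, hSv⟩ :=
        key_construction N m hN p α β hp1 hα hβ hαβ a ha w hw hnew hKw
      exact (csInf_le bdd1 ⟨v, hv, hnev, hKv, rfl⟩).trans hSv
    · exact le_csInf h1 fun s hs => csInf_le bdd2 (hsub hs)
  · have h1 : ¬ S1.Nonempty := fun ⟨s, hs⟩ => h2 ⟨s, hsub hs⟩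
    rw [Set.not_nonempty_iff_eq_empty] at h1 h2
    rw [h1, h2]
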